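/- If n > m > 1 are integers, then the resultant of Φ_n and Φ_m equals p^{φ(m)} if n/m = p^k for some prime p and integer k ≥ 1 (in particular m divides n), and equals 1 otherwise. -/
import Mathlib

open Polynomial

/-- The resultant of two monic polynomials over `ℂ`, defined as
`∏_{α root of f} g(α)` (roots taken with multiplicity). -/
noncomputable def resultantAux (f g : Polynomial ℂ) : ℂ :=
  (f.roots.map fun a => g.eval a).prod

open scoped Classical in
/-- The claimed value of the resultant `Res(Φ_n, Φ_m)`. -/
noncomputable def Cval (n m : ℕ) : ℂ :=
  if m ∣ n ∧ IsPrimePow (n / m) then ((n / m).minFac : ℂ) ^ m.totient else 1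

lemma Cval_ne_zero (n m : ℕ) : Cval n m ≠ 0 := by
  unfold Cval
  split_ifs with h
  · refine pow_ne_zero _ ?_
    have := Nat.minFac_prime (n := n / m) (by
      have := h.2.one_lt; omega)
    exact_mod_cast this.ne_zero
  · exact one_ne_zero

/-- `resultantAux (Φ n) g` as a product over primitive roots. -/
lemma resultantAux_cyclotomic (n : ℕ) (hn : n ≠ 0) (g : Polynomial ℂ) :
    resultantAux (cyclotomic n ℂ) g = ∏ ζ ∈ primitiveRoots n ℂ, g.eval ζ := by
  obtain ⟨ζ, hζ⟩ : ∃ ζ : ℂ, IsPrimitiveRoot ζ n :=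
    ⟨_, Complex.isPrimitiveRoot_exp n hn⟩
  unfold resultantAux
  rw [cyclotomic_eq_prod_X_sub_primitiveRoots hζ, roots_prod_X_sub_C]
  rfl

/-- a product over units of `ZMod e` equals the product over primitive roots. -/
lemma prod_units_eq_prod_primitiveRoots {e : ℕ} [NeZero e] {η : ℂ}
    (hη : IsPrimitiveRoot η e) (f : ℂ → ℂ) :
    ∏ b : (ZMod e)ˣ, f (η ^ (b : ZMod e).val) = ∏ ζ ∈ primitiveRoots e ℂ, f ζ := by
  have he : 0 < e := Nat.pos_of_ne_zero (NeZero.ne e)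
  refine Finset.prod_bij (fun b _ => η ^ (b : ZMod e).val) ?_ ?_ ?_ ?_
  · intro b _
    rw [mem_primitiveRoots he]
    exact (hη.pow_iff_coprime he _).2 (ZMod.val_coe_unit_coprime b)
  · intro a _ b _ hab
    have := hη.pow_inj (ZMod.val_lt _) (ZMod.val_lt _) hab
    exact Units.ext (ZMod.val_injective e this)
  · intro ζ hζmem
    rw [mem_primitiveRoots he] at hζmem
    obtain ⟨i, hi, hpow⟩ := hη.eq_pow_of_pow_eq_one hζmem.pow_eq_one
    have hcop : i.Coprime e := by
      have := (hη.pow_iff_coprime he i).1 (hpow ▸ hζmem)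
      exact this
    refine ⟨ZMod.unitOfCoprime i hcop, Finset.mem_univ _, ?_⟩
    show η ^ ((ZMod.unitOfCoprime i hcop : (ZMod e)ˣ) : ZMod e).val = ζ
    rw [ZMod.coe_unitOfCoprime, ZMod.val_natCast, Nat.mod_eq_of_lt hi, hpow]
  · intro b _
    rfl

lemma fiber_card_mul {G H : Type*} [Group G] [Group H] [Fintype G] [Fintype H]
    [DecidableEq H] (π : G →* H) (hs : Function.Surjective π) (b : H) :
    (Finset.univ.filter (fun u => π u = b)).card * Fintype.card H = Fintype.card G := by
  classical
  obtain ⟨u₀, hu₀⟩ := hs b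
  have h1 : (Finset.univ.filter (fun u => π u = b)).card = Nat.card π.ker := by
    rw [← Fintype.card_subtype, Nat.card_eq_fintype_card]
    apply Fintype.card_congr
    refine ⟨fun x => ⟨x.1 * u₀⁻¹, ?_⟩, fun y => ⟨y.1 * u₀, ?_⟩, ?_, ?_⟩
    · simp [MonoidHom.mem_ker, map_mul, x.2, hu₀]
    · have := y.2
      rw [MonoidHom.mem_ker] at this
      simp [map_mul, this, hu₀]
    · intro x; ext; simp [mul_assoc]
    · intro y; ext; simp [mul_assoc]
  have h2 : Nat.card G = Nat.card H * Nat.card π.ker := by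
    rw [Subgroup.card_eq_card_quotient_mul_card_subgroup π.ker]
    congr 1
    exact Nat.card_congr (QuotientGroup.quotientKerEquivOfSurjective π hs).toEquiv
  rw [h1]
  simp only [Nat.card_eq_fintype_card] at h2 ⊢
  rw [h2]; ring

/-- Step 3: the key product `∏_{ζ primitive n-th} (ζ^m - 1)`. -/
lemma prod_pow_sub_one (n m : ℕ) (hn : 2 < n) (hm : 0 < m) (hmn : m < n) :
    ∏ ζ ∈ primitiveRoots n ℂ, (ζ ^ m - 1)
      = ((cyclotomic (n / Nat.gcd n m) ℂ).eval 1) ^ (n.totient / (n / Nat.gcd n m).totient) := by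
  classical
  haveI : NeZero n := ⟨by omega⟩
  set g := Nat.gcd n m with hgdef
  have hg0 : 0 < g := Nat.gcd_pos_of_pos_left m (by omega)
  have hgn : g ∣ n := Nat.gcd_dvd_left n m
  have hgm : g ∣ m := Nat.gcd_dvd_right n m
  set e := n / g with hedef
  have hen : e ∣ n := Nat.div_dvd_of_dvd hgn
  have he0 : 0 < e := Nat.div_pos (Nat.le_of_dvd (by omega) hgn) hg0
  haveI : NeZero e := ⟨by omega⟩
  obtain ⟨ζ₀, hζ⟩ : ∃ ζ : ℂ, IsPrimitiveRoot ζ n :=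
    ⟨_, Complex.isPrimitiveRoot_exp n (by omega)⟩
  have hη : IsPrimitiveRoot (ζ₀ ^ g) e := hζ.pow (by omega) (Nat.mul_div_cancel' hgn).symm
  set η₀ := ζ₀ ^ g with hη₀def
  set c := m / g with hcdef
  have hmgc : m = g * c := (Nat.mul_div_cancel' hgm).symm
  have hc : c.Coprime e := by
    have := Nat.coprime_div_gcd_div_gcd (m := m) (n := n) (by rw [Nat.gcd_comm]; omega)
    rwa [Nat.gcd_comm m n, ← hgdef, ← hcdef, ← hedef] at this
  set cu : (ZMod e)ˣ := ZMod.unitOfCoprime c hc with hcudef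
  set F : (ZMod e)ˣ → ℂ := fun b => η₀ ^ ((cu * b : (ZMod e)ˣ) : ZMod e).val - 1 with hFdef
  -- helper : powers of η₀ depend only on exponent mod e
  have hmod : ∀ x : ℕ, η₀ ^ x = η₀ ^ (x % e) := by
    intro x
    conv_lhs => rw [← Nat.div_add_mod x e]
    rw [pow_add, pow_mul, hη.pow_eq_one, one_pow, one_mul]
  have hkey : ∀ u : (ZMod n)ˣ, (ζ₀ ^ (u : ZMod n).val) ^ m - 1 = F (ZMod.unitsMap hen u) := by
    intro u
    set A := (u : ZMod n).val with hAdef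
    have h1 : (ζ₀ ^ A) ^ m = η₀ ^ (A * c) := by
      rw [hη₀def, ← pow_mul, ← pow_mul]
      congr 1
      rw [hmgc]; ring
    have h2 : ((ZMod.unitsMap hen u : (ZMod e)ˣ) : ZMod e) = ((A : ℕ) : ZMod e) := by
      rw [ZMod.unitsMap_def]
      simp only [Units.coe_map, MonoidHom.coe_coe, ZMod.castHom_apply]
      rw [hAdef, ZMod.natCast_val]
    have h3 : ((cu * ZMod.unitsMap hen u : (ZMod e)ˣ) : ZMod e) = ((c * A : ℕ) : ZMod e) := by
      rw [Nat.cast_mul, Units.val_mul, h2, hcudef, ZMod.coe_unitOfCoprime]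
    rw [hFdef]
    simp only
    rw [h3, ZMod.val_natCast, h1, hmod (A * c), Nat.mul_comm A c]
  -- the fiber cardinality
  have hcardG : Fintype.card (ZMod n)ˣ = n.totient := ZMod.card_units_eq_totient n
  have hcardH : Fintype.card (ZMod e)ˣ = e.totient := ZMod.card_units_eq_totient e
  have hφe0 : 0 < e.totient := Nat.totient_pos.2 he0
  have hfib : ∀ b : (ZMod e)ˣ,
      (Finset.univ.filter (fun u => ZMod.unitsMap hen u = b)).card
        = n.totient / e.totient := by
    intro b
    have := fiber_card_mul (ZMod.unitsMap hen) (ZMod.unitsMap_surjective hen) b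
    rw [hcardG, hcardH] at this
    exact (Nat.div_eq_of_eq_mul_left hφe0 this.symm).symm
  calc ∏ ζ ∈ primitiveRoots n ℂ, (ζ ^ m - 1)
      = ∏ u : (ZMod n)ˣ, ((ζ₀ ^ (u : ZMod n).val) ^ m - 1) :=
        (prod_units_eq_prod_primitiveRoots hζ (fun z => z ^ m - 1)).symm
    _ = ∏ u : (ZMod n)ˣ, F (ZMod.unitsMap hen u) := Finset.prod_congr rfl fun u _ => hkey u
    _ = ∏ b ∈ Finset.image (ZMod.unitsMap hen) Finset.univ,
          F b ^ (Finset.univ.filter (fun u => ZMod.unitsMap hen u = b)).card :=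
        Finset.prod_comp F (ZMod.unitsMap hen)
    _ = ∏ b : (ZMod e)ˣ, F b ^ (n.totient / e.totient) := by
        rw [Finset.image_univ_of_surjective (ZMod.unitsMap_surjective hen)]
        exact Finset.prod_congr rfl fun b _ => by rw [hfib b]
    _ = (∏ b : (ZMod e)ˣ, F b) ^ (n.totient / e.totient) := by rw [Finset.prod_pow]
    _ = ((cyclotomic e ℂ).eval 1) ^ (n.totient / e.totient) := by
        have hprodF : (∏ b : (ZMod e)ˣ, F b)
            = (-1) ^ e.totient * (cyclotomic e ℂ).eval 1 := by
          have hre : ∏ b : (ZMod e)ˣ, F b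
              = ∏ b : (ZMod e)ˣ, (η₀ ^ ((b : (ZMod e)ˣ) : ZMod e).val - 1) := by
            rw [hFdef]
            exact Equiv.prod_comp (Equiv.mulLeft cu) (fun b => η₀ ^ ((b : ZMod e).val) - 1)
          rw [hre, prod_units_eq_prod_primitiveRoots hη (fun z => z - 1)]
          have heval : (cyclotomic e ℂ).eval 1 = ∏ ζ ∈ primitiveRoots e ℂ, (1 - ζ) := by
            rw [cyclotomic_eq_prod_X_sub_primitiveRoots hη, eval_prod]
            simp
          have hsign : ∏ ζ ∈ primitiveRoots e ℂ, (ζ - 1)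
              = (-1) ^ e.totient * ∏ ζ ∈ primitiveRoots e ℂ, (1 - ζ) := by
            rw [← hη.card_primitiveRoots, ← Finset.prod_const, ← Finset.prod_mul_distrib]
            exact Finset.prod_congr rfl fun ζ _ => by ring
          rw [hsign, ← heval]
        rw [hprodF, mul_pow, ← pow_mul,
          Nat.mul_div_cancel' (Nat.totient_dvd_of_dvd hen),
          Even.neg_one_pow (Nat.totient_even hn), one_mul]
    _ = ((cyclotomic (n / Nat.gcd n m) ℂ).eval 1) ^ (n.totient / (n / Nat.gcd n m).totient) := rfl

/-- Step 4: the number-theoretic identity for the claimed values. -/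
lemma prod_Cval (n m : ℕ) (hn : 2 < n) (hm : 0 < m) (hmn : m < n) :
    ∏ d ∈ m.divisors, Cval n d
      = ((cyclotomic (n / Nat.gcd n m) ℂ).eval 1) ^ (n.totient / (n / Nat.gcd n m).totient) := by
  classical
  have hn0 : n ≠ 0 := by omega
  set G := Nat.gcd n m with hGdef
  have hG0 : 0 < G := Nat.gcd_pos_of_pos_left m (by omega)
  have hGn : G ∣ n := Nat.gcd_dvd_left n m
  have hGm : G ∣ m := Nat.gcd_dvd_right n m
  have hGlt : G < n := lt_of_le_of_lt (Nat.le_of_dvd hm hGm) hmn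
  set e := n / G with hedef
  have hen : e ∣ n := Nat.div_dvd_of_dvd hGn
  have heG : e * G = n := Nat.div_mul_cancel hGn
  have he1 : 1 < e := by
    rcases Nat.lt_or_ge e 2 with h | h
    · interval_cases e <;> omega
    · exact h
  -- key divisibility: if d ∣ G then e ∣ n / d
  have hediv : ∀ d : ℕ, 0 < d → d ∣ G → e ∣ n / d := by
    intro d hd0 hdG
    refine ⟨G / d, ?_⟩
    rw [← heG, Nat.mul_div_assoc e hdG]
  by_cases hpp : IsPrimePow e
  · -- e = p ^ j is a prime power
    obtain ⟨p, j, hpP, hj0, hpj⟩ := hpp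
    have hp : p.Prime := Nat.prime_iff.2 hpP
    haveI : Fact p.Prime := ⟨hp⟩
    have hrhs : (cyclotomic e ℂ).eval 1 = (p : ℂ) := by
      have : e = p ^ ((j - 1) + 1) := by rw [← hpj]; congr 1; omega
      rw [this, eval_one_cyclotomic_prime_pow]
    rw [hrhs]
    set v := n.factorization p with hvdef
    set n' := n / p ^ v with hn'def
    have hpv : p ^ v ∣ n := Nat.ordProj_dvd n p
    have hnfac : p ^ v * n' = n := Nat.ordProj_mul_ordCompl_eq_self n p
    have hcop : p.Coprime n' := Nat.coprime_ordCompl hp hn0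
    have hn'0 : 0 < n' := Nat.ordCompl_pos p hn0
    have hjv : j ≤ v := by
      rw [← Nat.Prime.pow_dvd_iff_le_factorization hp hn0, hpj]
      exact hen
    have hGval : G = p ^ (v - j) * n' := by
      apply Nat.eq_of_mul_eq_mul_left (pow_pos hp.pos j)
      have h2 : p ^ j * (p ^ (v - j) * n') = n := by
        rw [← mul_assoc, ← pow_add, show j + (v - j) = v by omega, hnfac]
      rw [h2, hpj, heG]
    -- the set of relevant divisors
    set D := m.divisors.filter (fun d => d ∣ n ∧ IsPrimePow (n / d)) with hDdef
    have hDimage : D = Finset.image (fun t => n' * p ^ t) (Finset.range (v - j + 1)) := by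
      ext d
      simp only [hDdef, Finset.mem_filter, Nat.mem_divisors, Finset.mem_image,
        Finset.mem_range]
      constructor
      · rintro ⟨⟨hdm, _⟩, hdn, q, k, hqP, hk0, hqk⟩
        have hq : q.Prime := Nat.prime_iff.2 hqP
        have hd0 : 0 < d := Nat.pos_of_dvd_of_pos hdm (by omega)
        have hdG : d ∣ G := Nat.dvd_gcd hdn hdm
        have hend : e ∣ n / d := hediv d hd0 hdG
        have hpe : p ∣ e := by rw [← hpj]; exact dvd_pow_self p (by omega)
        have hpq : p ∣ q ^ k := by rw [hqk]; exact hpe.trans hend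
        have hqp : q = p := ((Nat.prime_dvd_prime_iff_eq hp hq).1 (hp.dvd_of_dvd_pow hpq)).symm
        rw [hqp] at hqk
        have hjk : j ≤ k := by
          have : p ^ j ∣ p ^ k := by rw [hpj, hqk]; exact hend
          exact (Nat.pow_dvd_pow_iff_le_right hp.one_lt).1 this
        have hkv : k ≤ v := by
          rw [← Nat.Prime.pow_dvd_iff_le_factorization hp hn0, hqk]
          exact Nat.div_dvd_of_dvd hdn
        have hnd : n = d * p ^ k := Nat.eq_mul_of_div_eq_right hdn hqk.symm
        have hdval : d = n' * p ^ (v - k) := by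
          apply Nat.eq_of_mul_eq_mul_right (pow_pos hp.pos k)
          rw [← hnd, mul_assoc, ← pow_add, show v - k + k = v by omega, ← hnfac]
          ring
        exact ⟨v - k, by omega, hdval.symm⟩
      · rintro ⟨t, ht, rfl⟩
        have htv : t ≤ v - j := by omega
        have hdG : n' * p ^ t ∣ G := by
          rw [hGval, mul_comm (p ^ (v - j)) n']
          exact mul_dvd_mul_left n' (pow_dvd_pow p htv)
        have hdn : n' * p ^ t ∣ n := hdG.trans hGn
        have hd0 : 0 < n' * p ^ t := Nat.mul_pos hn'0 (pow_pos hp.pos t)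
        have hquot : n / (n' * p ^ t) = p ^ (v - t) := by
          have : n = (n' * p ^ t) * p ^ (v - t) := by
            rw [mul_assoc, ← pow_add, ← hnfac, mul_comm]
            congr 2
            omega
          rw [this, Nat.mul_div_cancel_left _ hd0]
        refine ⟨⟨hdG.trans hGm, by omega⟩, hdn, p, v - t, hp.prime, by omega, hquot.symm⟩
    have h1 : ∏ d ∈ m.divisors, Cval n d = ∏ d ∈ D, Cval n d := by
      refine (Finset.prod_subset (Finset.filter_subset _ _) fun x hx hnx => ?_).symm
      unfold Cval
      rw [if_neg]
      intro hcond
      exact hnx (Finset.mem_filter.2 ⟨hx, hcond⟩)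
    have h2 : ∏ d ∈ D, Cval n d = ∏ d ∈ D, (p : ℂ) ^ d.totient := by
      refine Finset.prod_congr rfl fun d hd => ?_
      rw [hDdef, Finset.mem_filter] at hd
      obtain ⟨hdm, hdn, hppd⟩ := hd
      unfold Cval
      rw [if_pos ⟨hdn, hppd⟩]
      obtain ⟨q, k, hqP, hk0, hqk⟩ := hppd
      have hq : q.Prime := Nat.prime_iff.2 hqP
      have hdG : d ∣ G := Nat.dvd_gcd hdn (Nat.mem_divisors.1 hdm).1
      have hd0 : 0 < d := Nat.pos_of_dvd_of_pos (Nat.mem_divisors.1 hdm).1 (by omega)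
      have hend : e ∣ n / d := hediv d hd0 hdG
      have hpe : p ∣ e := by rw [← hpj]; exact dvd_pow_self p (by omega)
      have hpq : p ∣ q ^ k := by rw [hqk]; exact hpe.trans hend
      have hqp : q = p := ((Nat.prime_dvd_prime_iff_eq hp hq).1 (hp.dvd_of_dvd_pow hpq)).symm
      rw [hqp] at hqk
      rw [← hqk, hp.pow_minFac (by omega)]
    have h3 : ∏ d ∈ D, (p : ℂ) ^ d.totient = (p : ℂ) ^ (∑ d ∈ D, d.totient) := by
      rw [← Finset.prod_pow_eq_pow_sum]
    have hsum : ∑ d ∈ D, d.totient = n'.totient * p ^ (v - j) := by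
      rw [hDimage, Finset.sum_image (fun x _ y _ hxy =>
        Nat.pow_right_injective hp.two_le (Nat.eq_of_mul_eq_mul_left hn'0 hxy))]
      have hptot : ∑ t ∈ Finset.range (v - j + 1), (p ^ t).totient = p ^ (v - j) := by
        have h := Nat.sum_totient (p ^ (v - j))
        rw [Nat.divisors_prime_pow hp, Finset.sum_map] at h
        simpa using h
      calc ∑ t ∈ Finset.range (v - j + 1), (n' * p ^ t).totient
          = ∑ t ∈ Finset.range (v - j + 1), n'.totient * (p ^ t).totient :=
            Finset.sum_congr rfl fun t _ =>
              Nat.totient_mul (Nat.Coprime.pow_right t hcop.symm)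
        _ = n'.totient * ∑ t ∈ Finset.range (v - j + 1), (p ^ t).totient := by
            rw [Finset.mul_sum]
        _ = n'.totient * p ^ (v - j) := by rw [hptot]
    have hfinal : n.totient = (n'.totient * p ^ (v - j)) * e.totient := by
      have ha : n.totient = (p ^ v).totient * n'.totient := by
        rw [← Nat.totient_mul (Nat.Coprime.pow_left v hcop), hnfac]
      rw [ha, ← hpj, Nat.totient_prime_pow hp hj0,
        Nat.totient_prime_pow hp (by omega : 0 < v),
        show v - 1 = (v - j) + (j - 1) by omega, pow_add]
      ring
    have hK : n.totient / e.totient = n'.totient * p ^ (v - j) :=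
      Nat.div_eq_of_eq_mul_left (Nat.totient_pos.2 (by omega)) hfinal
    rw [h1, h2, h3, hsum, hK]
  · -- e is not a prime power
    have hrhs : (cyclotomic e ℂ).eval 1 = 1 := by
      apply eval_one_cyclotomic_not_prime_pow
      intro q hq k hqk
      rcases Nat.eq_zero_or_pos k with rfl | hk
      · simp at hqk; omega
      · exact hpp ⟨q, k, hq.prime, hk, hqk⟩
    rw [hrhs, one_pow]
    refine Finset.prod_eq_one fun d hd => ?_
    rw [Nat.mem_divisors] at hd
    unfold Cval
    rw [if_neg]
    rintro ⟨hdn, q, k, hqP, hk0, hqk⟩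
    have hq : q.Prime := Nat.prime_iff.2 hqP
    have hd0 : 0 < d := Nat.pos_of_dvd_of_pos hd.1 (by omega)
    have hdG : d ∣ G := Nat.dvd_gcd hdn hd.1
    have hend : e ∣ n / d := hediv d hd0 hdG
    rw [← hqk] at hend
    obtain ⟨i, hik, hei⟩ := (Nat.dvd_prime_pow hq).1 hend
    apply hpp
    exact ⟨q, i, hq.prime, by
      rcases Nat.eq_zero_or_pos i with rfl | h
      · simp at hei; omega
      · exact h, hei.symm⟩

lemma main_induction (n : ℕ) (hn : 2 < n) :
    ∀ m, 0 < m → m < n →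
      (∏ ζ ∈ primitiveRoots n ℂ, (cyclotomic m ℂ).eval ζ) = Cval n m := by
  intro m
  induction m using Nat.strong_induction_on with
  | _ m ih =>
    intro hm hmn
    have key : ∏ d ∈ m.divisors, ∏ ζ ∈ primitiveRoots n ℂ, (cyclotomic d ℂ).eval ζ
        = ∏ d ∈ m.divisors, Cval n d := by
      rw [Finset.prod_comm, prod_Cval n m hn hm hmn, ← prod_pow_sub_one n m hn hm hmn]
      refine Finset.prod_congr rfl fun ζ _ => ?_
      rw [← eval_prod, prod_cyclotomic_eq_X_pow_sub_one hm]
      simp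
    have hmem : m ∈ m.divisors := Nat.mem_divisors_self m (by omega)
    rw [Finset.prod_eq_mul_prod_sdiff_singleton_of_mem hmem, Finset.prod_eq_mul_prod_sdiff_singleton_of_mem hmem]
      at key
    have hrest : ∏ d ∈ m.divisors \ {m}, ∏ ζ ∈ primitiveRoots n ℂ, (cyclotomic d ℂ).eval ζ
        = ∏ d ∈ m.divisors \ {m}, Cval n d := by
      refine Finset.prod_congr rfl fun d hd => ?_
      rw [Finset.mem_sdiff, Nat.mem_divisors, Finset.mem_singleton] at hd
      have hdm : d < m := Nat.lt_of_le_of_ne (Nat.le_of_dvd hm hd.1.1) hd.2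
      exact ih d hdm (Nat.pos_of_dvd_of_pos hd.1.1 hm) (by omega)
    rw [hrest] at key
    have hne : ∏ d ∈ m.divisors \ {m}, Cval n d ≠ 0 :=
      Finset.prod_ne_zero_iff.2 fun d _ => Cval_ne_zero n d
    exact mul_right_cancel₀ hne key

theorem resultant_cyclotomic (n m : ℕ) (hm : 1 < m) (hmn : m < n) :
    (∀ p k : ℕ, p.Prime → 1 ≤ k → n = m * p ^ k →
      resultantAux (cyclotomic n ℂ) (cyclotomic m ℂ) = (p : ℂ) ^ m.totient) ∧
    ((¬ ∃ p k : ℕ, p.Prime ∧ 1 ≤ k ∧ n = m * p ^ k) →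
      resultantAux (cyclotomic n ℂ) (cyclotomic m ℂ) = 1) := by
  have hn2 : 2 < n := by omega
  have key := main_induction n hn2 m (by omega) hmn
  rw [resultantAux_cyclotomic n (by omega)]
  constructor
  · intro p k hp hk hnmk
    rw [key]
    unfold Cval
    have hdvd : m ∣ n := ⟨p ^ k, hnmk⟩
    have hq : n / m = p ^ k := by rw [hnmk]; exact Nat.mul_div_cancel_left _ (by omega)
    rw [if_pos ⟨hdvd, by rw [hq]; exact ⟨p, k, hp.prime, by omega, rfl⟩⟩, hq,
      hp.pow_minFac (by omega)]
  · intro hne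
    rw [key]
    unfold Cval
    rw [if_neg]
    rintro ⟨hdvd, q, k, hq, hk, hqk⟩
    exact hne ⟨q, k, hq.nat_prime, by
      constructor
      · by_contra h
        have : k = 0 := by omega
        subst this
        simp at hqk
        have := Nat.div_mul_cancel hdvd
        omega
      · rw [← Nat.div_mul_cancel hdvd, ← hqk]; ring⟩
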